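/- Let x_1, …, x_n be pairwise distinct complex numbers with |x_i| ≤ 1 and |x_i − x_j| ≥ ζ > 0 for i ≠ j, and ℓ_1, …, ℓ_n positive integers with N = Σ ℓ_i. Let u_{j,k} denote the row with index ℓ_1 + ⋯ + ℓ_{j−1} + k + 1 of the inverse of the confluent Vandermonde matrix U(x_1, ℓ_1, …, x_n, ℓ_n). Then ‖u_{j,k}‖₁ = Σ_{s=1}^{N} |(u_{j,k})_s| ≤ (2/ζ)^{N−ℓ_j} · (2^k/k!) · (1 + 2N/ζ)^{ℓ_j−1−k} for every k = 0, …, ℓ_j − 1. -/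

import Mathlib

open Polynomial Finset

namespace Prony

noncomputable def pnu (p : ℂ[X]) : ℝ := ∑ s ∈ p.support, ‖p.coeff s‖

lemma pnu_nonneg (p : ℂ[X]) : 0 ≤ pnu p :=
  Finset.sum_nonneg fun _ _ => norm_nonneg _

lemma pnu_eq_sum_range {p : ℂ[X]} {B : ℕ} (h : p.natDegree < B) :
    pnu p = ∑ s ∈ range B, ‖p.coeff s‖ := by
  refine Finset.sum_subset (Polynomial.supp_subset_range h) fun s _ hs => ?_
  simp [Polynomial.notMem_support_iff.mp hs]

lemma sum_range_abs_coeff_le (p : ℂ[X]) (B : ℕ) :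
    ∑ s ∈ range B, ‖p.coeff s‖ ≤ pnu p := by
  rcases lt_or_ge p.natDegree B with h | h
  · exact (pnu_eq_sum_range h).ge
  · rw [pnu_eq_sum_range (lt_add_one _)]
    refine Finset.sum_le_sum_of_subset_of_nonneg (Finset.range_subset_range.2 (by omega))
      fun _ _ _ => norm_nonneg _

lemma pnu_one : pnu (1 : ℂ[X]) = 1 := by
  rw [pnu_eq_sum_range (B := 1) (by simp)]; simp

lemma pnu_C_le (a : ℂ) : pnu (C a) ≤ ‖a‖ := by
  rw [pnu_eq_sum_range (B := 1) (by simp)]; simp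

lemma pnu_mul_le (p q : ℂ[X]) : pnu (p * q) ≤ pnu p * pnu q := by
  set D := p.natDegree + q.natDegree + 1 with hD
  have h1 : pnu (p * q) ≤ ∑ n ∈ range D,
      ∑ ab ∈ Finset.HasAntidiagonal.antidiagonal n, ‖p.coeff ab.1‖ * ‖q.coeff ab.2‖ := by
    have h2 : pnu (p * q) ≤ ∑ n ∈ range D, ‖(p * q).coeff n‖ := by
      rcases eq_or_ne (p * q) 0 with h | h
      · simp [h, pnu, Finset.sum_nonneg fun _ _ => norm_nonneg _]
      · exact le_of_eq (pnu_eq_sum_range (lt_of_le_of_lt (natDegree_mul_le) (by omega)))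
    refine h2.trans (Finset.sum_le_sum fun n _ => ?_)
    rw [Polynomial.coeff_mul]
    exact (norm_sum_le _ _).trans (le_of_eq (by simp [map_mul]))
  refine h1.trans ?_
  rw [Finset.sum_biUnion ?hdisj |>.symm]
  case hdisj =>
    intro u _ v _ huv
    simp only [Finset.disjoint_left]
    intro ab h1 h2
    exact huv ((Finset.HasAntidiagonal.mem_antidiagonal.1 h1).symm.trans (Finset.HasAntidiagonal.mem_antidiagonal.1 h2))
  calc ∑ ab ∈ (range D).biUnion Finset.HasAntidiagonal.antidiagonal,
        ‖p.coeff ab.1‖ * ‖q.coeff ab.2‖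
      ≤ ∑ ab ∈ range D ×ˢ range D,
        ‖p.coeff ab.1‖ * ‖q.coeff ab.2‖ := by
        refine Finset.sum_le_sum_of_subset_of_nonneg ?_ fun _ _ _ =>
          mul_nonneg (norm_nonneg _) (norm_nonneg _)
        intro ab hab
        simp only [Finset.mem_biUnion, Finset.mem_range, Finset.HasAntidiagonal.mem_antidiagonal] at hab
        obtain ⟨n, hn, h⟩ := hab
        simp only [Finset.mem_product, Finset.mem_range]
        omega
    _ = (∑ a ∈ range D, ‖p.coeff a‖) * (∑ b ∈ range D, ‖q.coeff b‖) := by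
        rw [Finset.sum_mul_sum]
        exact (Finset.sum_product _ _ _)
    _ ≤ pnu p * pnu q := by
        exact mul_le_mul (sum_range_abs_coeff_le _ _) (sum_range_abs_coeff_le _ _)
          (Finset.sum_nonneg fun _ _ => norm_nonneg _) (pnu_nonneg _)

lemma pnu_add_le (p q : ℂ[X]) : pnu (p + q) ≤ pnu p + pnu q := by
  have h : pnu (p + q) ≤ ∑ n ∈ p.support ∪ q.support, ‖(p + q).coeff n‖ := by
    refine le_of_eq (Finset.sum_subset (Polynomial.support_add) fun s _ hs => ?_)
    simp [Polynomial.notMem_support_iff.mp hs]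
  refine h.trans ?_
  have h2 : ∀ n, ‖(p+q).coeff n‖ ≤ ‖p.coeff n‖ + ‖q.coeff n‖ :=
    fun n => by rw [Polynomial.coeff_add]; exact norm_add_le _ _
  refine (Finset.sum_le_sum fun n _ => h2 n).trans ?_
  rw [Finset.sum_add_distrib]
  gcongr
  · refine le_of_eq (Finset.sum_subset Finset.subset_union_left fun s _ hs => by
      simp [Polynomial.notMem_support_iff.mp hs]).symm
  · refine le_of_eq (Finset.sum_subset Finset.subset_union_right fun s _ hs => by
      simp [Polynomial.notMem_support_iff.mp hs]).symm

lemma pnu_sum_le {ι : Type*} (s : Finset ι) (f : ι → ℂ[X]) :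
    pnu (∑ i ∈ s, f i) ≤ ∑ i ∈ s, pnu (f i) := by
  classical
  induction s using Finset.induction_on with
  | empty => simp [pnu]
  | insert _ _ h ih =>
    rw [Finset.sum_insert h, Finset.sum_insert h]
    exact (pnu_add_le _ _).trans (by gcongr)

lemma pnu_prod_le {ι : Type*} (s : Finset ι) (f : ι → ℂ[X]) :
    pnu (∏ i ∈ s, f i) ≤ ∏ i ∈ s, pnu (f i) := by
  classical
  induction s using Finset.induction_on with
  | empty => simp [pnu_one]
  | insert _ _ h ih =>
    rw [Finset.prod_insert h, Finset.prod_insert h]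
    exact (pnu_mul_le _ _).trans (mul_le_mul_of_nonneg_left ih (pnu_nonneg _))

lemma pnu_pow_le (p : ℂ[X]) (m : ℕ) : pnu (p ^ m) ≤ pnu p ^ m := by
  induction m with
  | zero => simp [pnu_one]
  | succ m ih =>
    rw [pow_succ, pow_succ]
    exact (pnu_mul_le _ _).trans (mul_le_mul_of_nonneg_right ih (pnu_nonneg _))

lemma pnu_X_sub_C_le {a : ℂ} (ha : ‖a‖ ≤ 1) : pnu (X - C a) ≤ 2 := by
  rw [pnu_eq_sum_range (B := 2) (by simpa using (natDegree_X_sub_C a).le.trans_lt one_lt_two)]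
  simp only [Finset.sum_range_succ, Finset.sum_range_zero]
  simp only [coeff_sub, coeff_X_zero, coeff_C_zero, coeff_X_one, coeff_C, if_neg one_ne_zero]
  simp only [if_pos trivial, zero_sub, sub_zero, norm_neg, norm_one]
  linarith


noncomputable def wser (c : ℂ) : PowerSeries ℂ := PowerSeries.mk fun t => (-1) ^ t * c⁻¹ ^ (t + 1)

lemma X_add_C_mul_wser {c : ℂ} (hc : c ≠ 0) :
    ((X + C c : ℂ[X]) : PowerSeries ℂ) * wser c = 1 := by
  rw [Polynomial.coe_add, Polynomial.coe_X, Polynomial.coe_C]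
  ext n
  rw [add_mul]
  cases n with
  | zero =>
    simp only [map_add, PowerSeries.coeff_zero_eq_constantCoeff_apply, map_mul,
      PowerSeries.constantCoeff_X, zero_mul, PowerSeries.constantCoeff_C, zero_add]
    simp [wser, PowerSeries.coeff_mk, ← PowerSeries.coeff_zero_eq_constantCoeff_apply,
      mul_inv_cancel₀ hc]
  | succ n =>
    simp only [map_add, PowerSeries.coeff_succ_X_mul, PowerSeries.coeff_C_mul, wser,
      PowerSeries.coeff_mk, PowerSeries.coeff_one, Nat.succ_ne_zero, if_false]
    field_simp [pow_succ]
    have h1 : c * (1 / c) = 1 := by field_simp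
    linear_combination (-(-1) ^ n * (1 / c) ^ (n + 1)) * h1

/-- Majorization of complex power series by real power series coefficients. -/
def Maj (f : PowerSeries ℂ) (g : PowerSeries ℝ) : Prop :=
  ∀ t, ‖PowerSeries.coeff t f‖ ≤ PowerSeries.coeff t g

lemma Maj.one : Maj 1 1 := by
  intro t
  simp only [PowerSeries.coeff_one]
  split <;> simp

lemma Maj.mul {f f' : PowerSeries ℂ} {g g' : PowerSeries ℝ} (h : Maj f g) (h' : Maj f' g') :
    Maj (f * f') (g * g') := by
  intro t
  rw [PowerSeries.coeff_mul, PowerSeries.coeff_mul]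
  refine (norm_sum_le _ _).trans (Finset.sum_le_sum fun ab _ => ?_)
  rw [norm_mul]
  exact mul_le_mul (h _) (h' _) (norm_nonneg _) ((norm_nonneg _).trans (h _))

lemma Maj.pow {f : PowerSeries ℂ} {g : PowerSeries ℝ} (h : Maj f g) (m : ℕ) :
    Maj (f ^ m) (g ^ m) := by
  induction m with
  | zero => simpa using Maj.one
  | succ m ih => rw [pow_succ, pow_succ]; exact ih.mul h

lemma Maj.prod {ι : Type*} (s : Finset ι) (f : ι → PowerSeries ℂ) (g : ι → PowerSeries ℝ)
    (h : ∀ i ∈ s, Maj (f i) (g i)) : Maj (∏ i ∈ s, f i) (∏ i ∈ s, g i) := by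
  classical
  induction s using Finset.induction_on with
  | empty => simpa using Maj.one
  | insert a s ha ih =>
    rw [Finset.prod_insert ha, Finset.prod_insert ha]
    exact (h a (Finset.mem_insert_self _ _)).mul
      (ih fun i hi => h i (Finset.mem_insert_of_mem hi))

noncomputable def Dser (ζ : ℝ) : PowerSeries ℝ := PowerSeries.mk fun t => ζ⁻¹ ^ (t + 1)

lemma maj_wser {c : ℂ} {ζ : ℝ} (hζ : 0 < ζ) (hc : ζ ≤ ‖c‖) : Maj (wser c) (Dser ζ) := by
  intro t
  simp only [wser, Dser, PowerSeries.coeff_mk, norm_mul, norm_pow, norm_neg, norm_one,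
    one_pow, one_mul, norm_inv]
  have h1 : 0 < ‖c‖ := lt_of_lt_of_le hζ hc
  exact pow_le_pow_left₀ (by positivity) (inv_anti₀ hζ hc) _

lemma coeff_Dser_pow {ζ : ℝ} (hζ : 0 < ζ) (m t : ℕ) :
    PowerSeries.coeff t (Dser ζ ^ (m + 1)) = (m + t).choose t * ζ⁻¹ ^ (m + 1 + t) := by
  induction m generalizing t with
  | zero => simp [Dser, PowerSeries.coeff_mk, add_comm 1 t]
  | succ m ih =>
    rw [pow_succ']
    rw [PowerSeries.coeff_mul]
    rw [Finset.Nat.sum_antidiagonal_eq_sum_range_succ (f := fun a b =>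
      PowerSeries.coeff a (Dser ζ) * PowerSeries.coeff b (Dser ζ ^ (m + 1)))]
    have : ∀ i ∈ range (t + 1), PowerSeries.coeff i (Dser ζ) *
        PowerSeries.coeff (t - i) (Dser ζ ^ (m + 1)) =
        ((m + (t - i)).choose (t - i) : ℝ) * ζ⁻¹ ^ (m + 2 + t) := by
      intro i hi
      rw [ih, Dser, PowerSeries.coeff_mk, mul_left_comm, ← pow_add,
        show i + 1 + (m + 1 + (t - i)) = m + 2 + t by
          have := Finset.mem_range.1 hi; omega]
    rw [Finset.sum_congr rfl this, ← Finset.sum_mul]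
    congr 1
    rw [← Nat.cast_sum]
    congr 1
    calc ∑ i ∈ range (t + 1), (m + (t - i)).choose (t - i)
        = ∑ i ∈ range (t + 1), (i + m).choose m := by
          rw [← Finset.sum_range_reflect]
          refine Finset.sum_congr rfl fun i hi => ?_
          have hi' := Finset.mem_range.1 hi
          have h1 : t + 1 - 1 - i = t - i := by omega
          rw [h1, show t - (t - i) = i by omega, add_comm m i, Nat.choose_symm_add]
      _ = (t + m + 1).choose (m + 1) := Nat.sum_range_add_choose t m
      _ = (m + 1 + t).choose t := by
          rw [show t + m + 1 = t + (m + 1) by omega, Nat.add_comm t (m + 1)]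
          exact Nat.choose_symm_add

lemma eval_iter_deriv_eq_sum {p : ℂ[X]} {N : ℕ} (h : p.natDegree < N) (m : ℕ) (y : ℂ) :
    (derivative^[m] p).eval y =
      ∑ s ∈ range N, (s.descFactorial m : ℂ) * p.coeff s * y ^ (s - m) := by
  rw [Polynomial.eval_eq_sum_range' (lt_of_le_of_lt
    ((Polynomial.natDegree_iterate_derivative p m).trans (Nat.sub_le _ _)) h)]
  simp only [Polynomial.coeff_iterate_derivative, nsmul_eq_mul]
  have hext : ∑ s ∈ range N, ((s.descFactorial m : ℂ) * p.coeff s * y ^ (s - m)) =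
      ∑ s ∈ range (m + N), ((s.descFactorial m : ℂ) * p.coeff s * y ^ (s - m)) := by
    refine (Finset.sum_subset (Finset.range_subset_range.mpr (Nat.le_add_left N m)) fun s _ hs => ?_)
    have : p.natDegree < s := by
      have := Finset.mem_range.not.1 hs; omega
    rw [Polynomial.coeff_eq_zero_of_natDegree_lt this]
    ring
  rw [hext, Finset.range_eq_Ico, Finset.range_eq_Ico, ← Finset.sum_Ico_consecutive _ (Nat.zero_le m) (by omega : m ≤ m + N)]
  have hzero : ∑ s ∈ Finset.Ico 0 m, (s.descFactorial m : ℂ) * p.coeff s * y ^ (s - m) = 0 := by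
    refine Finset.sum_eq_zero fun s hs => ?_
    rw [Nat.descFactorial_eq_zero_iff_lt.2 (Finset.mem_Ico.1 hs).2]
    simp
  rw [hzero, zero_add, Finset.sum_Ico_eq_sum_range]
  simp only [Nat.sub_zero, zero_add]
  rw [Finset.sum_Ico_eq_sum_range, show m + N - m = N by omega]
  refine Finset.sum_congr rfl fun i _ => ?_
  rw [show m + i - m = i by omega, show m + i = i + m by omega]

lemma eval_iter_deriv_zero_of_pow_dvd {p : ℂ[X]} {a : ℂ} {nn m : ℕ} (hm : m < nn)
    (hd : (X - C a) ^ nn ∣ p) : (derivative^[m] p).eval a = 0 := by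
  induction m generalizing nn p with
  | zero =>
    obtain ⟨q, rfl⟩ := hd
    simp [zero_pow (by omega : nn ≠ 0)]
  | succ m ih =>
    rw [Function.iterate_succ_apply]
    obtain ⟨q, rfl⟩ := hd
    have hp : (X - C a) ^ nn = (X - C a) ^ (nn - 1) * (X - C a) := by
      rw [← pow_succ]; congr 1; omega
    have hdvd : (X - C a) ^ (nn - 1) ∣ derivative ((X - C a) ^ nn * q) := by
      rw [derivative_mul, Polynomial.derivative_pow]
      exact dvd_add ⟨C (nn : ℂ) * derivative (X - C a) * q, by ring⟩
        ⟨(X - C a) * derivative q, by rw [hp]; ring⟩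
    exact ih (by omega) hdvd


section Herm

variable (n : ℕ) (x : Fin n → ℂ) (ℓ : Fin n → ℕ)

noncomputable def hermW (j : Fin n) : PowerSeries ℂ :=
  ∏ i ∈ Finset.univ.erase j, (wser (x j - x i)) ^ (ℓ i)

noncomputable def hermA (j : Fin n) : ℂ[X] :=
  ∏ i ∈ Finset.univ.erase j, (X + C (x j - x i)) ^ (ℓ i)

noncomputable def hermQ (j : Fin n) : ℂ[X] :=
  ∏ i ∈ Finset.univ.erase j, (X - C (x i)) ^ (ℓ i)

noncomputable def hermB (j : Fin n) (k : ℕ) : ℂ[X] :=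
  ∑ t ∈ range (ℓ j - k), C (PowerSeries.coeff t (hermW n x ℓ j)) * X ^ t

noncomputable def hermR (j : Fin n) (k : ℕ) : ℂ[X] :=
  C ((k.factorial : ℂ))⁻¹ * (X ^ k * (hermA n x ℓ j * hermB n x ℓ j k))

noncomputable def hermP (j : Fin n) (k : ℕ) : ℂ[X] :=
  (hermR n x ℓ j k).comp (X - C (x j))

variable {n x ℓ}

lemma hermA_mul_hermW (hdist : Function.Injective x) (j : Fin n) :
    ((hermA n x ℓ j : ℂ[X]) : PowerSeries ℂ) * hermW n x ℓ j = 1 := by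
  have hcoe : ((hermA n x ℓ j : ℂ[X]) : PowerSeries ℂ) =
      ∏ i ∈ Finset.univ.erase j, ((X + C (x j - x i) : ℂ[X]) : PowerSeries ℂ) ^ (ℓ i) := by
    rw [hermA, ← Polynomial.coeToPowerSeries.ringHom_apply, map_prod]
    exact Finset.prod_congr rfl fun i _ => map_pow _ _ _
  rw [hcoe, hermW, ← Finset.prod_mul_distrib]
  refine Finset.prod_eq_one fun i hi => ?_
  have hne : x j - x i ≠ 0 := by
    have : i ≠ j := (Finset.mem_erase.1 hi).1
    exact sub_ne_zero.mpr fun h => this (hdist h).symm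
  rw [← mul_pow, X_add_C_mul_wser hne, one_pow]

lemma coeff_hermB (j : Fin n) (k : ℕ) {b : ℕ} (hb : b < ℓ j - k) :
    (hermB n x ℓ j k).coeff b = PowerSeries.coeff b (hermW n x ℓ j) := by
  rw [hermB, Polynomial.finset_sum_coeff]
  rw [Finset.sum_eq_single b]
  · simp
  · intro t _ ht
    rw [Polynomial.coeff_C_mul, Polynomial.coeff_X_pow, if_neg (Ne.symm ht), mul_zero]
  · intro hb'
    exact absurd (Finset.mem_range.2 hb) hb'

lemma coeff_hermAB (hdist : Function.Injective x) (j : Fin n) (k : ℕ) {m : ℕ}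
    (hm : m < ℓ j - k) :
    (hermA n x ℓ j * hermB n x ℓ j k).coeff m = if m = 0 then 1 else 0 := by
  have h1 := congrArg (PowerSeries.coeff m) (hermA_mul_hermW (ℓ := ℓ) hdist j)
  rw [PowerSeries.coeff_mul, PowerSeries.coeff_one] at h1
  rw [Polynomial.coeff_mul, ← h1]
  refine Finset.sum_congr rfl fun ab hab => ?_
  have hb : ab.2 ≤ m := by
    have := Finset.HasAntidiagonal.mem_antidiagonal.1 hab; omega
  rw [Polynomial.coeff_coe, coeff_hermB j k (by omega)]

lemma hermA_comp (j : Fin n) :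
    (hermA n x ℓ j).comp (X - C (x j)) = hermQ n x ℓ j := by
  rw [hermA, hermQ, Polynomial.prod_comp]
  refine Finset.prod_congr rfl fun i _ => ?_
  rw [Polynomial.pow_comp, Polynomial.add_comp, Polynomial.X_comp, Polynomial.C_comp, C_sub]
  ring_nf

lemma hermP_eq (j : Fin n) (k : ℕ) :
    hermP n x ℓ j k = C ((k.factorial : ℂ))⁻¹ * ((X - C (x j)) ^ k *
      (hermQ n x ℓ j * (hermB n x ℓ j k).comp (X - C (x j)))) := by
  rw [hermP, hermR, Polynomial.mul_comp, Polynomial.mul_comp, Polynomial.mul_comp,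
    Polynomial.C_comp, Polynomial.pow_comp, Polynomial.X_comp, hermA_comp]

lemma taylor_hermP (j : Fin n) (k : ℕ) :
    Polynomial.taylor (x j) (hermP n x ℓ j k) = hermR n x ℓ j k := by
  rw [Polynomial.taylor_apply, hermP, Polynomial.comp_assoc]
  simp [Polynomial.sub_comp]

lemma natDegree_hermA_le (j : Fin n) :
    (hermA n x ℓ j).natDegree ≤ ∑ i ∈ Finset.univ.erase j, ℓ i := by
  refine (Polynomial.natDegree_prod_le _ _).trans (Finset.sum_le_sum fun i _ => ?_)
  refine Polynomial.natDegree_pow_le.trans ?_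
  have : (X + C (x j - x i)).natDegree ≤ 1 := by
    refine (Polynomial.natDegree_add_le _ _).trans (by simp)
  calc ℓ i * (X + C (x j - x i)).natDegree ≤ ℓ i * 1 := by
        exact Nat.mul_le_mul_left _ this
    _ = ℓ i := Nat.mul_one _

lemma natDegree_hermB_le (j : Fin n) (k : ℕ) (hk : k < ℓ j) :
    (hermB n x ℓ j k).natDegree ≤ ℓ j - 1 - k := by
  refine Polynomial.natDegree_sum_le_of_forall_le _ _ fun t ht => ?_
  refine (Polynomial.natDegree_C_mul_X_pow_le _ _).trans ?_
  have := Finset.mem_range.1 ht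
  omega


lemma natDegree_hermP_lt (j : Fin n) (k : ℕ) (hk : k < ℓ j) {N : ℕ} (hN : N = ∑ i, ℓ i) :
    (hermP n x ℓ j k).natDegree < N := by
  have hsum : (∑ i ∈ Finset.univ.erase j, ℓ i) + ℓ j = N := by
    rw [hN]; exact Finset.sum_erase_add _ _ (Finset.mem_univ j)
  have hR : (hermR n x ℓ j k).natDegree ≤ k + ((∑ i ∈ Finset.univ.erase j, ℓ i)
      + (ℓ j - 1 - k)) := by
    rw [hermR]
    refine Polynomial.natDegree_mul_le.trans ?_
    have h2 : (hermA n x ℓ j * hermB n x ℓ j k).natDegree ≤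
        (∑ i ∈ Finset.univ.erase j, ℓ i) + (ℓ j - 1 - k) :=
      Polynomial.natDegree_mul_le.trans
        (Nat.add_le_add (natDegree_hermA_le j) (natDegree_hermB_le j k hk))
    have h1 : (X ^ k * (hermA n x ℓ j * hermB n x ℓ j k)).natDegree ≤
        k + ((∑ i ∈ Finset.univ.erase j, ℓ i) + (ℓ j - 1 - k)) := by
      refine Polynomial.natDegree_mul_le.trans ?_
      rw [Polynomial.natDegree_X_pow]
      exact Nat.add_le_add_left h2 _
    simpa using h1
  have hP : (hermP n x ℓ j k).natDegree ≤ (hermR n x ℓ j k).natDegree * 1 := by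
    rw [hermP]
    refine Polynomial.natDegree_comp_le.trans ?_
    have : (X - C (x j)).natDegree ≤ 1 := (Polynomial.natDegree_sub_le _ _).trans (by simp)
    exact Nat.mul_le_mul_left _ this
  omega

lemma hermP_deriv (hdist : Function.Injective x) (j : Fin n) (k : ℕ) (hk : k < ℓ j)
    (j' : Fin n) (k' : ℕ) (hk' : k' < ℓ j') :
    (derivative^[k'] (hermP n x ℓ j k)).eval (x j') =
      if j' = j ∧ k' = k then 1 else 0 := by
  by_cases hj : j' = j
  · subst hj
    have h1 : (derivative^[k'] (hermP n x ℓ j' k)).eval (x j') =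
        (k'.factorial : ℂ) * (hermR n x ℓ j' k).coeff k' := by
      rw [← Polynomial.factorial_smul_hasseDeriv (R := ℂ) (k := k')]
      rw [LinearMap.smul_apply, ← taylor_hermP (x := x) j' k, Polynomial.taylor_coeff]
      simp [nsmul_eq_mul]
    rw [h1, hermR, Polynomial.coeff_C_mul, mul_comm (X ^ k : ℂ[X]) _,
      Polynomial.coeff_mul_X_pow']
    by_cases hkk : k ≤ k'
    · rw [if_pos hkk, coeff_hermAB hdist j' k (by omega)]
      by_cases hkek : k' = k
      · subst hkek
        rw [if_pos (by omega), if_pos ⟨rfl, rfl⟩]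
        rw [mul_one, mul_inv_cancel₀ (Nat.cast_ne_zero.2 (Nat.factorial_ne_zero k'))]
      · rw [if_neg (by omega), if_neg (by simp [hkek])]
        ring
    · rw [if_neg hkk, if_neg (by intro h; exact hkk h.2.ge)]
      ring
  · have hd : (X - C (x j')) ^ (ℓ j') ∣ hermP n x ℓ j k := by
      rw [hermP_eq]
      have h1 : (X - C (x j')) ^ (ℓ j') ∣ hermQ n x ℓ j :=
        Finset.dvd_prod_of_mem _ (Finset.mem_erase.2 ⟨hj, Finset.mem_univ j'⟩)
      exact ((h1.mul_right _).mul_left _).mul_left _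
    rw [eval_iter_deriv_zero_of_pow_dvd hk' hd, if_neg (by simp [hj])]


lemma pnu_hermP_le (hx : ∀ i, ‖x i‖ ≤ 1) {ζ : ℝ} (hζ : 0 < ζ)
    (hsep : ∀ i i' : Fin n, i ≠ i' → ζ ≤ ‖x i - x i'‖)
    {N : ℕ} (hN : N = ∑ i, ℓ i)
    (j : Fin n) (k : ℕ) (hk : k < ℓ j) :
    pnu (hermP n x ℓ j k) ≤ (2 / ζ) ^ (N - ℓ j) * (2 ^ k / (k.factorial : ℝ)) *
      (1 + 2 * N / ζ) ^ (ℓ j - 1 - k) := by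
  have hζ' : ζ ≠ 0 := ne_of_gt hζ
  set m0 := ∑ i ∈ Finset.univ.erase j, ℓ i with hm0def
  have hsum : m0 + ℓ j = N := by
    rw [hN, hm0def]; exact Finset.sum_erase_add _ _ (Finset.mem_univ j)
  have hm0 : m0 = N - ℓ j := by omega
  set M := ℓ j - 1 - k with hMdef
  have hMk : ℓ j - k = M + 1 := by omega
  -- majorization of hermW
  have hmaj : Maj (hermW n x ℓ j) (Dser ζ ^ m0) := by
    rw [hermW, hm0def, ← Finset.prod_pow_eq_pow_sum]
    refine Maj.prod _ _ _ fun i hi => ?_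
    exact (maj_wser hζ (hsep j i (Ne.symm (Finset.mem_erase.1 hi).1))).pow _
  have hcoef : ∀ t, t ≤ M → ‖PowerSeries.coeff t (hermW n x ℓ j)‖ ≤
      (N : ℝ) ^ t * ζ⁻¹ ^ (m0 + t) := by
    intro t ht
    refine (hmaj t).trans ?_
    rcases Nat.eq_zero_or_pos m0 with h0 | hpos
    · rw [h0, pow_zero, PowerSeries.coeff_one]
      rcases Nat.eq_zero_or_pos t with rfl | htpos
      · simp
      · rw [if_neg (by omega)]
        positivity
    · obtain ⟨m, hm⟩ : ∃ m, m0 = m + 1 := ⟨m0 - 1, by omega⟩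
      rw [hm, coeff_Dser_pow hζ]
      have hmtN : m + t ≤ N := by omega
      have hb : ((m + t).choose t : ℝ) ≤ (N : ℝ) ^ t := by
        calc ((m + t).choose t : ℝ) ≤ (((m + t) ^ t : ℕ) : ℝ) :=
              Nat.cast_le.2 (Nat.choose_le_pow _ _)
          _ ≤ (N : ℝ) ^ t := by
              rw [Nat.cast_pow]
              exact pow_le_pow_left₀ (by positivity) (Nat.cast_le.2 hmtN) _
      exact mul_le_mul_of_nonneg_right hb (by positivity)
  -- piece bounds
  have hb1 : pnu (C ((k.factorial : ℂ))⁻¹) ≤ ((k.factorial : ℝ))⁻¹ := by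
    refine (pnu_C_le _).trans ?_
    rw [norm_inv, Complex.norm_natCast]
  have hXk : ∀ t : ℕ, pnu ((X - C (x j)) ^ t) ≤ 2 ^ t := fun t =>
    (pnu_pow_le _ _).trans (pow_le_pow_left₀ (pnu_nonneg _) (pnu_X_sub_C_le (hx j)) t)
  have hb3 : pnu (hermQ n x ℓ j) ≤ 2 ^ m0 := by
    rw [hermQ]
    refine (pnu_prod_le _ _).trans ?_
    calc ∏ i ∈ Finset.univ.erase j, pnu ((X - C (x i)) ^ ℓ i)
        ≤ ∏ i ∈ Finset.univ.erase j, (2 : ℝ) ^ ℓ i := by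
          refine Finset.prod_le_prod (fun i _ => pnu_nonneg _) fun i _ => ?_
          exact (pnu_pow_le _ _).trans (pow_le_pow_left₀ (pnu_nonneg _) (pnu_X_sub_C_le (hx i)) _)
      _ = 2 ^ m0 := by rw [hm0def, Finset.prod_pow_eq_pow_sum]
  set S : ℝ := ∑ t ∈ range (M + 1),
    ‖PowerSeries.coeff t (hermW n x ℓ j)‖ * 2 ^ t with hSdef
  have hS0 : 0 ≤ S := Finset.sum_nonneg fun t _ =>
    mul_nonneg (norm_nonneg _) (by positivity)
  have hBc : (hermB n x ℓ j k).comp (X - C (x j)) =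
      ∑ t ∈ range (M + 1), C (PowerSeries.coeff t (hermW n x ℓ j)) * (X - C (x j)) ^ t := by
    rw [hermB, hMk, Polynomial.comp_eq_aeval, map_sum]
    refine Finset.sum_congr rfl fun t _ => ?_
    rw [map_mul, map_pow, Polynomial.aeval_C, Polynomial.aeval_X, Polynomial.algebraMap_eq]
  have hb4 : pnu ((hermB n x ℓ j k).comp (X - C (x j))) ≤ S := by
    rw [hBc, hSdef]
    refine (pnu_sum_le _ _).trans (Finset.sum_le_sum fun t _ => ?_)
    exact (pnu_mul_le _ _).trans (mul_le_mul ((pnu_C_le _)) (hXk t) (pnu_nonneg _)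
      (norm_nonneg _))
  have hb5 : S ≤ ζ⁻¹ ^ m0 * (1 + 2 * N / ζ) ^ M := by
    have hstep : S ≤ ∑ t ∈ range (M + 1), ζ⁻¹ ^ m0 * (2 * N / ζ) ^ t := by
      rw [hSdef]
      refine Finset.sum_le_sum fun t ht => ?_
      have h1 : ‖PowerSeries.coeff t (hermW n x ℓ j)‖ * 2 ^ t ≤
          ((N : ℝ) ^ t * ζ⁻¹ ^ (m0 + t)) * 2 ^ t :=
        mul_le_mul_of_nonneg_right (hcoef t (by have := Finset.mem_range.1 ht; omega))
          (by positivity)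
      refine h1.trans (le_of_eq ?_)
      rw [div_eq_mul_inv, mul_pow, mul_pow, pow_add]
      ring
    refine hstep.trans ?_
    rw [← Finset.mul_sum]
    refine mul_le_mul_of_nonneg_left ?_ (by positivity)
    have hexp : (1 + 2 * N / ζ) ^ M =
        ∑ t ∈ range (M + 1), (2 * N / ζ) ^ t * 1 ^ (M - t) * (M.choose t) := by
      rw [add_comm]
      exact add_pow _ _ _
    rw [hexp]
    refine Finset.sum_le_sum fun t ht => ?_
    have hch : (1 : ℝ) ≤ (M.choose t : ℝ) := by
      have := Nat.choose_pos (by have := Finset.mem_range.1 ht; omega : t ≤ M)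
      exact_mod_cast this
    rw [one_pow, mul_one]
    exact le_mul_of_one_le_right (by positivity) hch
  -- final combination
  calc pnu (hermP n x ℓ j k)
      = pnu (C ((k.factorial : ℂ))⁻¹ * ((X - C (x j)) ^ k *
          (hermQ n x ℓ j * (hermB n x ℓ j k).comp (X - C (x j))))) := by rw [hermP_eq]
    _ ≤ pnu (C ((k.factorial : ℂ))⁻¹) * pnu ((X - C (x j)) ^ k *
          (hermQ n x ℓ j * (hermB n x ℓ j k).comp (X - C (x j)))) := pnu_mul_le _ _
    _ ≤ ((k.factorial : ℝ))⁻¹ * (2 ^ k * (2 ^ m0 * S)) := by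
        refine mul_le_mul hb1 ?_ (pnu_nonneg _) (by positivity)
        refine (pnu_mul_le _ _).trans ?_
        refine mul_le_mul (hXk k) ?_ (pnu_nonneg _) (by positivity)
        refine (pnu_mul_le _ _).trans ?_
        exact mul_le_mul hb3 hb4 (pnu_nonneg _) (by positivity)
    _ ≤ ((k.factorial : ℝ))⁻¹ * (2 ^ k * (2 ^ m0 * (ζ⁻¹ ^ m0 * (1 + 2 * N / ζ) ^ M))) := by
        have h2 : (0:ℝ) < (k.factorial : ℝ) := by positivity
        gcongr
    _ = (2 / ζ) ^ (N - ℓ j) * (2 ^ k / (k.factorial : ℝ)) * (1 + 2 * N / ζ) ^ (ℓ j - 1 - k) := by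
        rw [← hm0, ← hMdef]
        have hpow : ((2:ℝ)/ζ)^m0 = 2^m0 * ζ⁻¹^m0 := by
          rw [div_pow, inv_pow, div_eq_mul_inv]
        rw [hpow, div_eq_mul_inv ((2:ℝ)^k)]
        ring


lemma sigma_eq {n : ℕ} {ℓ : Fin n → ℕ} {a b : (j : Fin n) × Fin (ℓ j)}
    (h1 : a.1 = b.1) (h2 : (a.2 : ℕ) = (b.2 : ℕ)) : a = b := by
  obtain ⟨a1, a2⟩ := a
  obtain ⟨b1, b2⟩ := b
  dsimp at h1 h2
  subst h1
  exact congrArg (Sigma.mk a1) (Fin.ext h2)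

end Herm

end Prony

theorem prony_confluent_vandermonde_inverse_rows (n : ℕ) (x : Fin n → ℂ)
    (hx : ∀ i, ‖x i‖ ≤ 1) (hdist : Function.Injective x)
    (ζ : ℝ) (hζ : 0 < ζ)
    (hsep : ∀ i i' : Fin n, i ≠ i' → ζ ≤ ‖x i - x i'‖)
    (ℓ : Fin n → ℕ) (hℓ : ∀ i, 1 ≤ ℓ i)
    (N : ℕ) (hN : N = ∑ i, ℓ i)
    (e : ((j : Fin n) × Fin (ℓ j)) ≃ Fin N)
    (U : Matrix (Fin N) (Fin N) ℂ)
    (hU : ∀ (k : Fin N) (c : Fin N),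
      U k c = (((k : ℕ).descFactorial ((e.symm c).2 : ℕ) : ℂ)) *
        x (e.symm c).1 ^ ((k : ℕ) - ((e.symm c).2 : ℕ)))
    (j : Fin n) (k : Fin (ℓ j)) :
    ∑ s : Fin N, ‖U⁻¹ (e ⟨j, k⟩) s‖ ≤
      (2 / ζ) ^ (N - ℓ j) * (2 ^ (k : ℕ) / (Nat.factorial k : ℝ)) *
        (1 + 2 * N / ζ) ^ (ℓ j - 1 - (k : ℕ)) := by
  classical
  open Prony Polynomial Finset in
  set V : Matrix (Fin N) (Fin N) ℂ := fun r s =>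
    (Prony.hermP n x ℓ (e.symm r).1 ((e.symm r).2 : ℕ)).coeff (s : ℕ) with hV
  have hVU : V * U = 1 := by
    ext r c
    rw [Matrix.mul_apply, Matrix.one_apply]
    have hdeg := Prony.natDegree_hermP_lt (x := x) (e.symm r).1 ((e.symm r).2 : ℕ)
      (e.symm r).2.isLt hN
    have hsum2 : ∑ s : Fin N, V r s * U s c =
        (Polynomial.derivative^[((e.symm c).2 : ℕ)]
          (Prony.hermP n x ℓ (e.symm r).1 ((e.symm r).2 : ℕ))).eval (x (e.symm c).1) := by
      rw [Prony.eval_iter_deriv_eq_sum hdeg, ← Fin.sum_univ_eq_sum_range]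
      refine Finset.sum_congr rfl fun s _ => ?_
      rw [hV, hU s c]
      ring
    rw [hsum2, Prony.hermP_deriv hdist _ _ (e.symm r).2.isLt _ _ (e.symm c).2.isLt]
    by_cases hrc : r = c
    · subst hrc
      rw [if_pos rfl, if_pos ⟨rfl, rfl⟩]
    · rw [if_neg hrc, if_neg ?_]
      rintro ⟨h1, h2⟩
      exact hrc (e.symm.injective (Prony.sigma_eq h1 h2)).symm
  have hUinv : U⁻¹ = V := Matrix.inv_eq_left_inv hVU
  rw [hUinv]
  have hrow : e.symm (e ⟨j, k⟩) = ⟨j, k⟩ := e.symm_apply_apply _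
  calc ∑ s : Fin N, ‖V (e ⟨j, k⟩) s‖
      = ∑ s ∈ Finset.range N, ‖(Prony.hermP n x ℓ j (k : ℕ)).coeff s‖ := by
        rw [← Fin.sum_univ_eq_sum_range]
        refine Finset.sum_congr rfl fun s _ => ?_
        have h2 : ((e.symm (e ⟨j, k⟩)).2 : ℕ) = (k : ℕ) :=
          congrArg (fun p : (j : Fin n) × Fin (ℓ j) => (p.2 : ℕ)) hrow
        simp only [hV, Equiv.symm_apply_apply, h2]
    _ ≤ Prony.pnu (Prony.hermP n x ℓ j (k : ℕ)) := Prony.sum_range_abs_coeff_le _ _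
    _ ≤ (2 / ζ) ^ (N - ℓ j) * (2 ^ (k : ℕ) / (Nat.factorial k : ℝ)) *
        (1 + 2 * N / ζ) ^ (ℓ j - 1 - (k : ℕ)) :=
      Prony.pnu_hermP_le hx hζ hsep hN j (k : ℕ) k.isLt
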